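/- Let δ > 5/2 and D > 0, and let (t_n)_{n ∈ ℕ} be a sequence of nonnegative real numbers such that for every natural number N, the number of indices n with t_n ∈ [N, N+1) is at most D·(N+1)². Then there exists a constant C > 0, depending only on δ and D, with the following property: for every continuously differentiable function g : ℝ → ℂ satisfying ∫_ℝ (|g(t)|² + |g'(t)|²)·(1 + t²)^{δ} dt < ∞, the series ∑_n |g(t_n)| converges and ∑_n |g(t_n)| ≤ C · ( ∫_ℝ (|g(t)|² + |g'(t)|²)·(1 + t²)^{δ} dt )^{1/2}. -/

import Mathlib

open MeasureTheory Real intervalIntegral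

lemma sobolev_icc (g : ℝ → ℂ) (hg : ContDiff ℝ 1 g) (N x : ℝ)
    (hx : x ∈ Set.Icc N (N + 1)) :
    ‖g x‖ ^ 2 ≤ 2 * ∫ s in N..(N+1), (‖g s‖ ^ 2 + ‖deriv g s‖ ^ 2) := by
  have hN : N ≤ N + 1 := by linarith
  have hgc : Continuous g := hg.continuous
  have hg'c : Continuous (deriv g) := hg.continuous_deriv le_rfl
  set F : ℝ → ℝ := fun s => ‖g s‖ ^ 2 with hF
  set φ : ℝ → ℝ := fun s => 2 * (inner ℝ (g s) (deriv g s) : ℝ) with hφ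
  have Fc : Continuous F := (hgc.norm.pow 2)
  have φc : Continuous φ := continuous_const.mul (hgc.inner hg'c)
  have hder : ∀ s, HasDerivAt F (φ s) s := by
    intro s
    have h1 : HasDerivAt g (deriv g s) s :=
      ((hg.differentiable one_ne_zero) s).hasDerivAt
    have h2 := h1.inner ℝ h1
    have : F = fun s => (inner ℝ (g s) (g s) : ℝ) := by
      funext s; simp [hF, real_inner_self_eq_norm_sq]
    rw [this]
    refine h2.congr_deriv ?_
    rw [hφ]
    simp only [real_inner_comm (deriv g s) (g s)]
    ring
  have hφb : ∀ s, |φ s| ≤ ‖g s‖ ^ 2 + ‖deriv g s‖ ^ 2 := by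
    intro s
    have h1 : |(inner ℝ (g s) (deriv g s) : ℝ)| ≤ ‖g s‖ * ‖deriv g s‖ :=
      abs_real_inner_le_norm _ _
    have h2 : 2 * (‖g s‖ * ‖deriv g s‖) ≤ ‖g s‖ ^ 2 + ‖deriv g s‖ ^ 2 := by
      nlinarith [sq_nonneg (‖g s‖ - ‖deriv g s‖)]
    calc |φ s| = 2 * |(inner ℝ (g s) (deriv g s) : ℝ)| := by
          rw [hφ]; rw [abs_mul]; norm_num
      _ ≤ 2 * (‖g s‖ * ‖deriv g s‖) := by linarith
      _ ≤ _ := h2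
  obtain ⟨y, hy, hmin⟩ := isCompact_Icc.exists_isMinOn ⟨N, le_refl N, hN⟩
    Fc.continuousOn
  have hFTC : ∫ s in y..x, φ s = F x - F y :=
    intervalIntegral.integral_eq_sub_of_hasDerivAt (fun s _ => hder s)
      (φc.intervalIntegrable y x)
  have habs : |∫ s in y..x, φ s| ≤ ∫ s in N..(N+1), |φ s| := by
    have hai : IntervalIntegrable (fun s => |φ s|) volume N (N+1) :=
      (φc.abs).intervalIntegrable N (N+1)
    have hnn : (0 : ℝ → ℝ) ≤ᶠ[ae (volume.restrict (Set.Ioc N (N+1)))] fun s => |φ s| :=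
      Filter.Eventually.of_forall (fun s => abs_nonneg _)
    rcases le_total y x with h | h
    · calc |∫ s in y..x, φ s| ≤ ∫ s in y..x, |φ s| := by
            have := intervalIntegral.norm_integral_le_integral_norm (f := φ)
              (μ := volume) (a := y) (b := x) h
            simpa using this
        _ ≤ ∫ s in N..(N+1), |φ s| :=
            intervalIntegral.integral_mono_interval hy.1 h hx.2 hnn hai
    · rw [intervalIntegral.integral_symm x y, abs_neg]
      calc |∫ s in x..y, φ s| ≤ ∫ s in x..y, |φ s| := by
            have := intervalIntegral.norm_integral_le_integral_norm (f := φ)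
              (μ := volume) (a := x) (b := y) h
            simpa using this
        _ ≤ ∫ s in N..(N+1), |φ s| :=
            intervalIntegral.integral_mono_interval hx.1 h hy.2 hnn hai
  have hFy : F y ≤ ∫ s in N..(N+1), F s := by
    have : ∫ s in N..(N+1), F y = F y := by simp
    rw [← this]
    exact intervalIntegral.integral_mono_on hN (intervalIntegrable_const)
      (Fc.intervalIntegrable _ _) (fun s hs => hmin hs)
  have h1 : ∫ s in N..(N+1), F s ≤ ∫ s in N..(N+1), (‖g s‖ ^ 2 + ‖deriv g s‖ ^ 2) :=
    intervalIntegral.integral_mono_on hN (Fc.intervalIntegrable _ _)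
      ((Fc.add (hg'c.norm.pow 2)).intervalIntegrable _ _)
      (fun s _ => le_add_of_nonneg_right (by positivity))
  have h2 : ∫ s in N..(N+1), |φ s| ≤ ∫ s in N..(N+1), (‖g s‖ ^ 2 + ‖deriv g s‖ ^ 2) :=
    intervalIntegral.integral_mono_on hN ((φc.abs).intervalIntegrable _ _)
      ((Fc.add (hg'c.norm.pow 2)).intervalIntegrable _ _)
      (fun s _ => hφb s)
  have : F x ≤ F y + |∫ s in y..x, φ s| := by
    have := hFTC
    nlinarith [abs_nonneg (∫ s in y..x, φ s), le_abs_self (∫ s in y..x, φ s)]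
  calc ‖g x‖ ^ 2 = F x := rfl
    _ ≤ F y + |∫ s in y..x, φ s| := this
    _ ≤ (∫ s in N..(N+1), F s) + ∫ s in N..(N+1), |φ s| := add_le_add hFy habs
    _ ≤ _ := by linarith

theorem spectral_functional_continuous (δ D : ℝ) (hδ : 5 / 2 < δ) (hD : 0 < D)
    (t : ℕ → ℝ) (ht : ∀ n, 0 ≤ t n)
    (hfin : ∀ N : ℕ, {n : ℕ | t n ∈ Set.Ico (N : ℝ) ((N : ℝ) + 1)}.Finite)
    (hcard : ∀ N : ℕ, ((hfin N).toFinset.card : ℝ) ≤ D * ((N : ℝ) + 1) ^ 2) :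
    ∃ C : ℝ, 0 < C ∧
      ∀ g : ℝ → ℂ, ContDiff ℝ 1 g →
        Integrable (fun s => (‖g s‖ ^ 2 + ‖deriv g s‖ ^ 2) * (1 + s ^ 2) ^ δ) →
        (Summable fun n => ‖g (t n)‖) ∧
          ∑' n, ‖g (t n)‖ ≤
            C * Real.sqrt (∫ s : ℝ, (‖g s‖ ^ 2 + ‖deriv g s‖ ^ 2) * (1 + s ^ 2) ^ δ) := by
  classical
  have hδ0 : (0 : ℝ) ≤ δ := by linarith
  -- the p-series
  have hSsum : Summable (fun N : ℕ => (((N : ℝ) + 1) ^ ((2 : ℝ) - δ)) ^ 2) := by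
    have h1 : Summable (fun n : ℕ => (n : ℝ) ^ ((4 : ℝ) - 2 * δ)) :=
      Real.summable_nat_rpow.mpr (by linarith)
    have h2 := h1.comp_injective Nat.succ_injective
    apply h2.congr
    intro N
    have hpos : (0 : ℝ) < (N : ℝ) + 1 := by positivity
    simp only [Function.comp_apply, Nat.cast_succ]
    rw [← Real.rpow_natCast (((N : ℝ) + 1) ^ ((2 : ℝ) - δ)) 2,
      ← Real.rpow_mul hpos.le]
    norm_num
    ring_nf
  set S : ℝ := ∑' N : ℕ, (((N : ℝ) + 1) ^ ((2 : ℝ) - δ)) ^ 2 with hSdef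
  have hS1 : (1 : ℝ) ≤ S := by
    have := Summable.le_tsum hSsum 0 (fun i _ => sq_nonneg _)
    simpa using this
  have hSpos : 0 < Real.sqrt S := Real.sqrt_pos.mpr (by linarith)
  have h2pos : (0 : ℝ) < Real.sqrt (2 ^ (δ + 1)) :=
    Real.sqrt_pos.mpr (Real.rpow_pos_of_pos two_pos _)
  refine ⟨D * Real.sqrt (2 ^ (δ + 1)) * Real.sqrt S, by positivity, ?_⟩
  intro g hg hInt
  set hw : ℝ → ℝ := fun s => (‖g s‖ ^ 2 + ‖deriv g s‖ ^ 2) * (1 + s ^ 2) ^ δ with hhw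
  have hwc : Continuous hw := by
    apply Continuous.mul
    · exact (hg.continuous.norm.pow 2).add ((hg.continuous_deriv le_rfl).norm.pow 2)
    · exact Continuous.rpow_const (by continuity) (fun x => Or.inr hδ0)
  have hwnn : ∀ s, 0 ≤ hw s := fun s =>
    mul_nonneg (by positivity) (Real.rpow_nonneg (by positivity) _)
  set I : ℝ := ∫ s : ℝ, hw s with hIdef
  have hI0 : (0 : ℝ) ≤ I := integral_nonneg hwnn
  set J : ℕ → ℝ := fun N => ∫ s in (N : ℝ)..((N : ℝ) + 1), hw s with hJdef
  have hJ0 : ∀ N, 0 ≤ J N := fun N =>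
    intervalIntegral.integral_nonneg (by linarith) (fun s _ => hwnn s)
  -- pointwise bound on [N, N+1]
  have key : ∀ N : ℕ, ∀ x ∈ Set.Icc ((N : ℝ)) ((N : ℝ) + 1),
      ‖g x‖ ≤ Real.sqrt (2 ^ (δ + 1)) * ((N : ℝ) + 1) ^ (-δ) * Real.sqrt (J N) := by
    intro N x hx
    have hpos : (0 : ℝ) < (N : ℝ) + 1 := by positivity
    have hN1 : (N : ℝ) ≤ (N : ℝ) + 1 := by linarith
    have hc : ∀ s ∈ Set.Icc ((N : ℝ)) ((N : ℝ) + 1),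
        ‖g s‖ ^ 2 + ‖deriv g s‖ ^ 2
          ≤ (2 : ℝ) ^ δ * ((N : ℝ) + 1) ^ (-(2 * δ)) * hw s := by
      intro s hs
      have hsN : (N : ℝ) ≤ s := hs.1
      have hN0 : (0 : ℝ) ≤ (N : ℝ) := Nat.cast_nonneg N
      have hb : (2 : ℝ) ^ (-δ) * ((N : ℝ) + 1) ^ (2 * δ) ≤ (1 + s ^ 2) ^ δ := by
        have h1 : ((N : ℝ) + 1) ^ (2 : ℝ) / 2 ≤ 1 + s ^ 2 := by
          rw [Real.rpow_two]
          nlinarith [sq_nonneg ((N : ℝ) - 1)]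
        have h2 : (2 : ℝ) ^ (-δ) * ((N : ℝ) + 1) ^ (2 * δ)
            = (((N : ℝ) + 1) ^ (2 : ℝ) / 2) ^ δ := by
          rw [Real.div_rpow (Real.rpow_nonneg hpos.le _) two_pos.le,
            ← Real.rpow_mul hpos.le, Real.rpow_neg two_pos.le]
          ring_nf
        rw [h2]
        exact Real.rpow_le_rpow (by positivity) h1 hδ0
      have u1 : (2 : ℝ) ^ δ * (2 : ℝ) ^ (-δ) = 1 := by
        rw [← Real.rpow_add two_pos]; simp
      have u2 : ((N : ℝ) + 1) ^ (-(2 * δ)) * ((N : ℝ) + 1) ^ (2 * δ) = 1 := by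
        rw [← Real.rpow_add hpos]; simp
      have u3 : (2 : ℝ) ^ δ * ((N : ℝ) + 1) ^ (-(2 * δ))
          * ((2 : ℝ) ^ (-δ) * ((N : ℝ) + 1) ^ (2 * δ)) = 1 := by
        rw [mul_mul_mul_comm, u1, u2, mul_one]
      have h0nn : (0 : ℝ) ≤ ‖g s‖ ^ 2 + ‖deriv g s‖ ^ 2 := by positivity
      have step : (‖g s‖ ^ 2 + ‖deriv g s‖ ^ 2) * ((2 : ℝ) ^ (-δ) * ((N : ℝ) + 1) ^ (2 * δ))
          ≤ (‖g s‖ ^ 2 + ‖deriv g s‖ ^ 2) * (1 + s ^ 2) ^ δ :=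
        mul_le_mul_of_nonneg_left hb h0nn
      calc ‖g s‖ ^ 2 + ‖deriv g s‖ ^ 2
          = ((2 : ℝ) ^ δ * ((N : ℝ) + 1) ^ (-(2 * δ))
              * ((2 : ℝ) ^ (-δ) * ((N : ℝ) + 1) ^ (2 * δ))) * (‖g s‖ ^ 2 + ‖deriv g s‖ ^ 2) := by
            rw [u3, one_mul]
        _ = ((2 : ℝ) ^ δ * ((N : ℝ) + 1) ^ (-(2 * δ)))
              * ((‖g s‖ ^ 2 + ‖deriv g s‖ ^ 2) * ((2 : ℝ) ^ (-δ) * ((N : ℝ) + 1) ^ (2 * δ))) := by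
            ring
        _ ≤ ((2 : ℝ) ^ δ * ((N : ℝ) + 1) ^ (-(2 * δ)))
              * ((‖g s‖ ^ 2 + ‖deriv g s‖ ^ 2) * (1 + s ^ 2) ^ δ) :=
            mul_le_mul_of_nonneg_left step (by positivity)
        _ = (2 : ℝ) ^ δ * ((N : ℝ) + 1) ^ (-(2 * δ)) * hw s := by
            simp only [hhw]
    have hint1 : ∫ s in (N : ℝ)..((N : ℝ) + 1), (‖g s‖ ^ 2 + ‖deriv g s‖ ^ 2)
        ≤ (2 : ℝ) ^ δ * ((N : ℝ) + 1) ^ (-(2 * δ)) * J N := by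
      have := intervalIntegral.integral_mono_on (μ := volume) hN1
        (((hg.continuous.norm.pow 2).add ((hg.continuous_deriv le_rfl).norm.pow 2)).intervalIntegrable _ _)
        ((continuous_const.mul hwc).intervalIntegrable _ _) hc
      calc ∫ s in (N : ℝ)..((N : ℝ) + 1), (‖g s‖ ^ 2 + ‖deriv g s‖ ^ 2)
          ≤ ∫ s in (N : ℝ)..((N : ℝ) + 1), (2 : ℝ) ^ δ * ((N : ℝ) + 1) ^ (-(2 * δ)) * hw s := this
        _ = (2 : ℝ) ^ δ * ((N : ℝ) + 1) ^ (-(2 * δ)) * J N := by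
            simp only [hJdef]
            exact intervalIntegral.integral_const_mul _ _
    have hsq : ‖g x‖ ^ 2 ≤ (2 : ℝ) ^ (δ + 1) * ((N : ℝ) + 1) ^ (-(2 * δ)) * J N := by
      have h1 := sobolev_icc g hg (N : ℝ) x hx
      have h2 : (2 : ℝ) ^ (δ + 1) = 2 * (2 : ℝ) ^ δ := by
        rw [Real.rpow_add two_pos, Real.rpow_one]; ring
      rw [h2]
      nlinarith [hint1]
    have hrhs0 : (0 : ℝ) ≤ Real.sqrt (2 ^ (δ + 1)) * ((N : ℝ) + 1) ^ (-δ) * Real.sqrt (J N) := by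
      positivity
    have hrsq : (Real.sqrt (2 ^ (δ + 1)) * ((N : ℝ) + 1) ^ (-δ) * Real.sqrt (J N)) ^ 2
        = (2 : ℝ) ^ (δ + 1) * ((N : ℝ) + 1) ^ (-(2 * δ)) * J N := by
      have e1 : (((N : ℝ) + 1) ^ (-δ)) ^ 2 = ((N : ℝ) + 1) ^ (-(2 * δ)) := by
        rw [← Real.rpow_natCast (((N : ℝ) + 1) ^ (-δ)) 2, ← Real.rpow_mul hpos.le]
        norm_num; ring_nf
      rw [mul_pow, mul_pow, Real.sq_sqrt (Real.rpow_nonneg two_pos.le _),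
        Real.sq_sqrt (hJ0 N), e1]
    nlinarith [Real.sq_sqrt (hJ0 N), sq_nonneg (‖g x‖ - Real.sqrt (2 ^ (δ + 1)) * ((N : ℝ) + 1) ^ (-δ) * Real.sqrt (J N)), norm_nonneg (g x), hrhs0, hrsq, hsq]
  -- finite-sum bound
  have main : ∀ u : Finset ℕ,
      ∑ n ∈ u, ‖g (t n)‖ ≤ D * Real.sqrt (2 ^ (δ + 1)) * Real.sqrt S * Real.sqrt I := by
    intro u
    set f : ℕ → ℕ := fun n => ⌊t n⌋₊ with hf
    set K : ℕ := u.sup f with hK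
    have hmaps : ∀ n ∈ u, f n ∈ Finset.range (K + 1) := fun n hn =>
      Finset.mem_range.2 (Nat.lt_succ_of_le (Finset.le_sup hn))
    rw [← Finset.sum_fiberwise_of_maps_to hmaps (fun n => ‖g (t n)‖)]
    set b : ℕ → ℝ := fun N =>
      Real.sqrt (2 ^ (δ + 1)) * ((N : ℝ) + 1) ^ (-δ) * Real.sqrt (J N) with hbdef
    have hbnn : ∀ N, 0 ≤ b N := fun N => by
      simp only [hbdef]; positivity
    have inner : ∀ N ∈ Finset.range (K + 1),
        ∑ n ∈ u.filter (fun n => f n = N), ‖g (t n)‖ ≤ D * ((N : ℝ) + 1) ^ 2 * b N := by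
      intro N _
      have hle : ∀ n ∈ u.filter (fun n => f n = N), ‖g (t n)‖ ≤ b N := by
        intro n hn
        have hfn : f n = N := (Finset.mem_filter.1 hn).2
        have h1 : (N : ℝ) ≤ t n := by
          rw [← hfn]; exact Nat.floor_le (ht n)
        have h2 : t n ≤ (N : ℝ) + 1 := by
          have h3 := Nat.lt_floor_add_one (t n)
          have h4 : ((f n : ℕ) : ℝ) = (N : ℝ) := by exact_mod_cast hfn
          rw [hf] at h4
          simp only at h4
          linarith [h3, h4.ge]
        exact key N (t n) ⟨h1, h2⟩
      have hsub : u.filter (fun n => f n = N) ⊆ (hfin N).toFinset := by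
        intro n hn
        have hfn : f n = N := (Finset.mem_filter.1 hn).2
        rw [Set.Finite.mem_toFinset]
        constructor
        · rw [← hfn]; exact Nat.floor_le (ht n)
        · have h3 := Nat.lt_floor_add_one (t n)
          have h4 : ((f n : ℕ) : ℝ) = (N : ℝ) := by exact_mod_cast hfn
          rw [hf] at h4
          simp only at h4
          calc t n < (⌊t n⌋₊ : ℝ) + 1 := h3
            _ = (N : ℝ) + 1 := by rw [h4]
      have hcardu : ((u.filter (fun n => f n = N)).card : ℝ) ≤ D * ((N : ℝ) + 1) ^ 2 :=
        le_trans (by exact_mod_cast Finset.card_le_card hsub) (hcard N)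
      calc ∑ n ∈ u.filter (fun n => f n = N), ‖g (t n)‖
          ≤ (u.filter (fun n => f n = N)).card • b N :=
            Finset.sum_le_card_nsmul _ _ _ hle
        _ = ((u.filter (fun n => f n = N)).card : ℝ) * b N := nsmul_eq_mul _ _
        _ ≤ D * ((N : ℝ) + 1) ^ 2 * b N :=
            mul_le_mul_of_nonneg_right hcardu (hbnn N)
    refine le_trans (Finset.sum_le_sum inner) ?_
    have e : ∀ N : ℕ, D * ((N : ℝ) + 1) ^ 2 * b N
        = D * Real.sqrt (2 ^ (δ + 1)) * (((N : ℝ) + 1) ^ ((2 : ℝ) - δ) * Real.sqrt (J N)) := by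
      intro N
      have hpos : (0 : ℝ) < (N : ℝ) + 1 := by positivity
      have h1 : ((N : ℝ) + 1) ^ ((2 : ℝ) - δ) = ((N : ℝ) + 1) ^ 2 * ((N : ℝ) + 1) ^ (-δ) := by
        rw [← Real.rpow_natCast ((N : ℝ) + 1) 2, ← Real.rpow_add hpos, sub_eq_add_neg]
        norm_num
      simp only [hbdef]
      rw [h1]; ring
    rw [Finset.sum_congr rfl (fun N _ => e N), ← Finset.mul_sum]
    have hCS : ∑ N ∈ Finset.range (K + 1), ((N : ℝ) + 1) ^ ((2 : ℝ) - δ) * Real.sqrt (J N)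
        ≤ Real.sqrt S * Real.sqrt I := by
      have h1 := Real.sum_mul_le_sqrt_mul_sqrt (Finset.range (K + 1))
        (fun N => ((N : ℝ) + 1) ^ ((2 : ℝ) - δ)) (fun N => Real.sqrt (J N))
      have h2 : ∑ N ∈ Finset.range (K + 1), (((N : ℝ) + 1) ^ ((2 : ℝ) - δ)) ^ 2 ≤ S :=
        Summable.sum_le_tsum _ (fun i _ => sq_nonneg _) hSsum
      have h3 : ∑ N ∈ Finset.range (K + 1), (Real.sqrt (J N)) ^ 2 ≤ I := by
        have e2 : ∑ N ∈ Finset.range (K + 1), (Real.sqrt (J N)) ^ 2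
            = ∑ N ∈ Finset.range (K + 1), J N :=
          Finset.sum_congr rfl (fun N _ => Real.sq_sqrt (hJ0 N))
        rw [e2]
        have hadj := intervalIntegral.sum_integral_adjacent_intervals
          (a := fun i : ℕ => (i : ℝ)) (f := hw) (μ := volume) (n := K + 1)
          (fun k _ => hwc.intervalIntegrable _ _)
        have e3 : ∑ N ∈ Finset.range (K + 1), J N
            = ∫ s in (0 : ℝ)..((K : ℝ) + 1), hw s := by
          simp only [hJdef]
          simpa using hadj
        rw [e3]
        have hle0 : (0 : ℝ) ≤ (K : ℝ) + 1 := by positivity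
        rw [intervalIntegral.integral_of_le hle0]
        rw [hIdef]
        have : ∫ s in Set.Ioc (0 : ℝ) ((K : ℝ) + 1), hw s ≤ ∫ s, hw s :=
          setIntegral_le_integral hInt (Filter.Eventually.of_forall hwnn)
        exact this
      calc ∑ N ∈ Finset.range (K + 1), ((N : ℝ) + 1) ^ ((2 : ℝ) - δ) * Real.sqrt (J N)
          ≤ Real.sqrt (∑ N ∈ Finset.range (K + 1), (((N : ℝ) + 1) ^ ((2 : ℝ) - δ)) ^ 2)
            * Real.sqrt (∑ N ∈ Finset.range (K + 1), (Real.sqrt (J N)) ^ 2) := h1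
        _ ≤ Real.sqrt S * Real.sqrt I :=
            mul_le_mul (Real.sqrt_le_sqrt h2) (Real.sqrt_le_sqrt h3)
              (Real.sqrt_nonneg _) (Real.sqrt_nonneg _)
    calc D * Real.sqrt (2 ^ (δ + 1))
          * ∑ N ∈ Finset.range (K + 1), ((N : ℝ) + 1) ^ ((2 : ℝ) - δ) * Real.sqrt (J N)
        ≤ D * Real.sqrt (2 ^ (δ + 1)) * (Real.sqrt S * Real.sqrt I) :=
          mul_le_mul_of_nonneg_left hCS (by positivity)
      _ = D * Real.sqrt (2 ^ (δ + 1)) * Real.sqrt S * Real.sqrt I := by ring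
  have hsum : Summable (fun n => ‖g (t n)‖) :=
    summable_of_sum_range_le (fun n => norm_nonneg _) (fun n => main (Finset.range n))
  exact ⟨hsum, Real.tsum_le_of_sum_range_le (fun n => norm_nonneg _)
    (fun n => main (Finset.range n))⟩
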